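/- Let w be a permutation word of {1,...,n} such that for some indices i <= j, the descent set of w intersected with {i,...,j} equals {j}, i.e., within the letters i,...,j+1 the word restricted to these letters reads i, i+1, ..., c-1, j+1, c, c+1, ..., j for some c with i <= c <= j. Then the sequence of elementary dual Knuth moves t_j, t_{j-1}, ..., t_i (swapping j+1 with j, then j with j-1, etc., skipping non-applicable swaps) transforms the restriction to the alphabet {i,...,j+1} into the word (i+1), (i+2), ..., c, (c+1), i, (c+2), ..., j, (j+1); that is, the entries c+1,...,j+1 are cyclically shifted down by one and the entries i,...,c are cyclically shifted down by one. -/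

import Mathlib

open Finset

/-- The descent set of a permutation word of `{1,…,n}`, recorded via the
position function `pos` (value ↦ position): `a` is a descent iff `a+1`
appears to the left of `a`. -/
def descSet (n : ℕ) (pos : ℕ → ℕ) : Finset ℕ :=
  (Icc 1 (n - 1)).filter fun a => pos (a + 1) < pos a

/-- The elementary dual Knuth move `t_a`: swap the values `a` and `a+1`
(i.e. exchange their positions), subject to the requirement that the descent
sets before and after the swap are incomparable under inclusion. -/
def DKMove (n a : ℕ) (p q : ℕ → ℕ) : Prop :=
  1 ≤ a ∧ a + 1 ≤ n ∧
    q = Function.update (Function.update p a (p (a + 1))) (a + 1) (p a) ∧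
    ¬ descSet n p ⊆ descSet n q ∧ ¬ descSet n q ⊆ descSet n p

/-- A chain of dual Knuth moves with the given list of labels. -/
def DKChain (n : ℕ) : (ℕ → ℕ) → List ℕ → (ℕ → ℕ) → Prop
  | p, [], q => q = p
  | p, a :: L, q => ∃ p', DKMove n a p p' ∧ DKChain n p' L q

/-- intermediate word in phase 1 -/
def Sw (pos : ℕ → ℕ) (j m : ℕ) : ℕ → ℕ := fun a =>
  if a = m + 1 then pos (j + 1)
  else if m + 2 ≤ a ∧ a ≤ j + 1 then pos (a - 1)
  else pos a

/-- intermediate word in phase 2 -/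
def Tw (pos : ℕ → ℕ) (j c m : ℕ) : ℕ → ℕ := fun a =>
  if a = m then pos c
  else if m + 1 ≤ a ∧ a ≤ c then pos (a - 1)
  else if a = c + 1 then pos (j + 1)
  else if c + 2 ≤ a ∧ a ≤ j + 1 then pos (a - 1)
  else pos a

lemma mem_descSet {n a : ℕ} {p : ℕ → ℕ} :
    a ∈ descSet n p ↔ 1 ≤ a ∧ a ≤ n - 1 ∧ p (a + 1) < p a := by
  simp [descSet, Finset.mem_filter, Finset.mem_Icc, and_assoc]

lemma move1 (n j m : ℕ) (pos : ℕ → ℕ) (h1m : 1 ≤ m) (hmj : m + 1 ≤ j) (hjn : j + 1 ≤ n)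
    (ha : pos (j + 1) < pos m) (hb : pos (j + 1) < pos (m + 1))
    (hcd : pos m < pos (m + 1)) :
    DKMove n (m + 1) (Sw pos j (m + 1)) (Sw pos j m) := by
  have e1 : Sw pos j (m + 1) (m + 1) = pos (m + 1) := by
    simp only [Sw]; split_ifs <;> first | rfl | (exact congrArg pos (by omega)) | (exfalso; omega)
  have e2 : Sw pos j (m + 1) (m + 1 + 1) = pos (j + 1) := by
    simp only [Sw]; split_ifs <;> first | rfl | (exact congrArg pos (by omega)) | (exfalso; omega)
  have e3 : Sw pos j (m + 1) m = pos m := by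
    simp only [Sw]; split_ifs <;> first | rfl | (exact congrArg pos (by omega)) | (exfalso; omega)
  have f1 : Sw pos j m (m + 1) = pos (j + 1) := by
    simp only [Sw]; split_ifs <;> first | rfl | (exact congrArg pos (by omega)) | (exfalso; omega)
  have f2 : Sw pos j m (m + 1 + 1) = pos (m + 1) := by
    simp only [Sw]; split_ifs <;> first | rfl | (exact congrArg pos (by omega)) | (exfalso; omega)
  have f3 : Sw pos j m m = pos m := by
    simp only [Sw]; split_ifs <;> first | rfl | (exact congrArg pos (by omega)) | (exfalso; omega)
  refine ⟨by omega, by omega, ?_, ?_, ?_⟩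
  · funext b
    simp only [Sw, Function.update_apply]
    split_ifs <;> first | rfl | (exact congrArg pos (by omega)) | (exfalso; omega)
  · -- witness m+1 ∈ p \ q
    intro hsub
    have hin : (m + 1) ∈ descSet n (Sw pos j (m + 1)) := by
      rw [mem_descSet]; exact ⟨by omega, by omega, by rw [e1, e2]; exact hb⟩
    have := (mem_descSet.mp (hsub hin)).2.2
    rw [f1, f2] at this
    exact hb.asymm this
  · -- witness m ∈ q \ p
    intro hsub
    have hin : m ∈ descSet n (Sw pos j m) := by
      rw [mem_descSet]; exact ⟨by omega, by omega, by rw [f1, f3]; exact ha⟩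
    have := (mem_descSet.mp (hsub hin)).2.2
    rw [e1, e3] at this
    exact hcd.asymm this

lemma move2 (n i j c m : ℕ) (pos : ℕ → ℕ) (hi : 1 ≤ i) (him : i ≤ m) (hmc : m < c)
    (hcj : c ≤ j) (hjn : j + 1 ≤ n)
    (mono1 : ∀ x y, i ≤ x → x ≤ y → y < c → pos x ≤ pos y)
    (h2 : i < c → pos (c - 1) < pos (j + 1))
    (h3 : pos (j + 1) < pos c) :
    DKMove n m (Tw pos j c (m + 1)) (Tw pos j c m) := by
  have hic : i < c := lt_of_le_of_lt him hmc
  have hmc1 : pos m ≤ pos (c - 1) := mono1 m (c - 1) him (by omega) (by omega)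
  have hA : pos m < pos c := lt_of_le_of_lt hmc1 (lt_trans (h2 hic) h3)
  have e1 : Tw pos j c (m + 1) (m + 1) = pos c := by
    simp only [Tw]; split_ifs <;> first | rfl | (exact congrArg pos (by omega)) | (exfalso; omega)
  have e3 : Tw pos j c (m + 1) m = pos m := by
    simp only [Tw]; split_ifs <;> first | rfl | (exact congrArg pos (by omega)) | (exfalso; omega)
  have f1 : Tw pos j c m (m + 1) = pos m := by
    simp only [Tw]; split_ifs <;> first | rfl | (exact congrArg pos (by omega)) | (exfalso; omega)
  have f3 : Tw pos j c m m = pos c := by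
    simp only [Tw]; split_ifs <;> first | rfl | (exact congrArg pos (by omega)) | (exfalso; omega)
  -- value at m+2 (same for both words)
  have e2 : Tw pos j c (m + 1) (m + 1 + 1) = (if m + 2 ≤ c then pos (m + 1) else pos (j + 1)) := by
    by_cases hc2 : m + 2 ≤ c <;>
      · simp only [Tw]; split_ifs <;> first | rfl | (exact congrArg pos (by omega)) | (exfalso; omega)
  have f2 : Tw pos j c m (m + 1 + 1) = (if m + 2 ≤ c then pos (m + 1) else pos (j + 1)) := by
    by_cases hc2 : m + 2 ≤ c <;>
      · simp only [Tw]; split_ifs <;> first | rfl | (exact congrArg pos (by omega)) | (exfalso; omega)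
  have hB : (if m + 2 ≤ c then pos (m + 1) else pos (j + 1)) < pos c := by
    split_ifs with hc2
    · exact lt_of_le_of_lt (mono1 (m + 1) (c - 1) (by omega) (by omega) (by omega))
        (lt_trans (h2 hic) h3)
    · exact h3
  have hC : ¬ (if m + 2 ≤ c then pos (m + 1) else pos (j + 1)) < pos m := by
    split_ifs with hc2
    · exact not_lt.mpr (mono1 m (m + 1) him (by omega) (by omega))
    · have hm' : m = c - 1 := by omega
      rw [hm']; exact (h2 hic).asymm
  refine ⟨by omega, by omega, ?_, ?_, ?_⟩
  · funext b
    simp only [Tw, Function.update_apply]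
    split_ifs <;> first | rfl | (exact congrArg pos (by omega)) | (exfalso; omega)
  · -- witness m+1 ∈ p \ q
    intro hsub
    have hin : (m + 1) ∈ descSet n (Tw pos j c (m + 1)) := by
      rw [mem_descSet]; exact ⟨by omega, by omega, by rw [e1, e2]; exact hB⟩
    have := (mem_descSet.mp (hsub hin)).2.2
    rw [f1, f2] at this
    exact hC this
  · -- witness m ∈ q \ p
    intro hsub
    have hin : m ∈ descSet n (Tw pos j c m) := by
      rw [mem_descSet]; exact ⟨by omega, by omega, by rw [f1, f3]; exact hA⟩
    have := (mem_descSet.mp (hsub hin)).2.2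
    rw [e1, e3] at this
    exact hA.asymm this

/-- descending list `[a+k, a+k-1, …, a+1]` -/
def dl : ℕ → ℕ → List ℕ
  | _, 0 => []
  | a, k + 1 => (a + k + 1) :: dl a k

lemma dl_mem (a : ℕ) : ∀ k x, x ∈ dl a k → a + 1 ≤ x ∧ x ≤ a + k := by
  intro k
  induction k with
  | zero => intro x hx; simp [dl] at hx
  | succ k ih =>
    intro x hx
    rcases List.mem_cons.mp hx with h | h
    · omega
    · have := ih x h; omega

lemma dl_aux (a : ℕ) : ∀ (k : ℕ) (l : List ℕ), List.Chain' (· > ·) l →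
    (∀ y ∈ l.head?, y ≤ a) →
    List.Chain' (· > ·) (dl a k ++ l) ∧ ∀ y ∈ (dl a k ++ l).head?, y ≤ a + k := by
  intro k
  induction k with
  | zero => intro l h1 h2; exact ⟨h1, fun y hy => by have := h2 y hy; omega⟩
  | succ k ih =>
    intro l h1 h2
    obtain ⟨hc, hh⟩ := ih l h1 h2
    have hcons : dl a (k + 1) ++ l = (a + k + 1) :: (dl a k ++ l) := rfl
    rw [hcons]
    constructor
    · exact List.isChain_cons.mpr ⟨fun y hy => by have := hh y hy; omega, hc⟩
    · intro y hy; simp at hy; omega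

lemma dkchain_append {n : ℕ} {p q r : ℕ → ℕ} {L1 L2 : List ℕ}
    (h1 : DKChain n p L1 q) (h2 : DKChain n q L2 r) : DKChain n p (L1 ++ L2) r := by
  induction L1 generalizing p with
  | nil => rw [show DKChain n p [] q = (q = p) from rfl] at h1; subst h1; exact h2
  | cons a L ih =>
    obtain ⟨p', hm, hc⟩ := h1
    exact ⟨p', hm, ih hc⟩

lemma chain1 (n i j c : ℕ) (pos : ℕ → ℕ) (hi : 1 ≤ i) (hic : i ≤ c) (hjn : j + 1 ≤ n)
    (h3 : pos (j + 1) < pos c)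
    (mono2 : ∀ x y, c ≤ x → x ≤ y → y ≤ j → pos x ≤ pos y)
    (h4 : ∀ a, c ≤ a → a < j → pos a < pos (a + 1)) :
    ∀ k, c + k ≤ j → DKChain n (Sw pos j (c + k)) (dl c k) (Sw pos j c) := by
  intro k
  induction k with
  | zero => intro _; exact rfl
  | succ k ih =>
    intro hk
    refine ⟨Sw pos j (c + k), ?_, ih (by omega)⟩
    exact move1 n j (c + k) pos (by omega) (by omega) hjn
      (lt_of_lt_of_le h3 (mono2 c (c + k) le_rfl (by omega) (by omega)))
      (lt_of_lt_of_le h3 (mono2 c (c + k + 1) le_rfl (by omega) (by omega)))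
      (h4 (c + k) (by omega) (by omega))

lemma chain2 (n i j c : ℕ) (pos : ℕ → ℕ) (hi : 1 ≤ i) (hic : i ≤ c)
    (hcj : c ≤ j) (hjn : j + 1 ≤ n)
    (mono1 : ∀ x y, i ≤ x → x ≤ y → y < c → pos x ≤ pos y)
    (h2 : i < c → pos (c - 1) < pos (j + 1))
    (h3 : pos (j + 1) < pos c) :
    ∀ k, i + k ≤ c → DKChain n (Tw pos j c (i + k)) (dl (i - 1) k) (Tw pos j c i) := by
  intro k
  induction k with
  | zero => intro _; exact rfl
  | succ k ih =>
    intro hk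
    have hl : i - 1 + k + 1 = i + k := by omega
    have hcons : dl (i - 1) (k + 1) = (i + k) :: dl (i - 1) k := by
      simp only [dl, hl]
    rw [hcons]
    refine ⟨Tw pos j c (i + k), ?_, ih (by omega)⟩
    exact move2 n i j c (i + k) pos hi (by omega) (by omega) hcj hjn mono1 h2 h3

lemma mono_of_step {pos : ℕ → ℕ} {lo hi : ℕ} (h : ∀ a, lo ≤ a → a + 1 ≤ hi → pos a < pos (a + 1)) :
    ∀ x y, lo ≤ x → x ≤ y → y ≤ hi → pos x ≤ pos y := by
  have key : ∀ d x, lo ≤ x → x + d ≤ hi → pos x ≤ pos (x + d) := by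
    intro d
    induction d with
    | zero => intro x _ _; exact le_rfl
    | succ d ih =>
      intro x hx hxd
      have h1 := ih x hx (by omega)
      have h2 := h (x + d) (by omega) (by omega)
      calc pos x ≤ pos (x + d) := h1
        _ ≤ pos (x + d + 1) := le_of_lt h2
  intro x y hx hxy hy
  have := key (y - x) x hx (by omega)
  rwa [show x + (y - x) = y by omega] at this


/-- let `w` be a permutation word of `{1,…,n}` whose restriction
to the letters `{i,…,j+1}` reads `i, i+1, …, c-1, j+1, c, c+1, …, j` (so
`D(w) ∩ {i,…,j} = {j}`, and `c` is the smallest value following `j+1`).  Then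
the sequence of elementary dual Knuth moves `t_j, t_{j-1}, …, t_i` (with the
inapplicable ones skipped, so the labels used form a decreasing list inside
`[i, j]`) transforms `w` into the word `w'` whose restriction to
`{i,…,j+1}` is `(i+1), (i+2), …, c, (c+1), i, (c+2), …, j, (j+1)`: the
letters `c+1,…,j+1` are cyclically shifted by one and the letters `i,…,c`
are cyclically shifted by one. -/
theorem pcomb_dual_knuth (n i j c : ℕ) (pos : ℕ → ℕ)
    (hinj : Function.Injective pos)
    (hi : 1 ≤ i) (hic : i ≤ c) (hcj : c ≤ j) (hjn : j + 1 ≤ n)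
    (h1 : ∀ a, i ≤ a → a + 1 < c → pos a < pos (a + 1))
    (h2 : i < c → pos (c - 1) < pos (j + 1))
    (h3 : pos (j + 1) < pos c)
    (h4 : ∀ a, c ≤ a → a < j → pos a < pos (a + 1))
    (pos' : ℕ → ℕ)
    (hpos' : pos' = fun a =>
      if a = i then pos c
      else if i + 1 ≤ a ∧ a ≤ j + 1 then
        (if a = c + 1 then pos (j + 1) else pos (a - 1))
      else pos a) :
    ∃ L : List ℕ, L.Chain' (· > ·) ∧ (∀ a ∈ L, i ≤ a ∧ a ≤ j) ∧
      DKChain n pos L pos' := by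
  have mono1 : ∀ x y, i ≤ x → x ≤ y → y < c → pos x ≤ pos y := by
    intro x y hx hxy hy
    exact mono_of_step (lo := i) (hi := c - 1)
      (fun a ha hac => h1 a ha (by omega)) x y hx hxy (by omega)
  have mono2 : ∀ x y, c ≤ x → x ≤ y → y ≤ j → pos x ≤ pos y :=
    mono_of_step (fun a ha haj => h4 a ha (by omega))
  have hS : Sw pos j j = pos := by
    funext a
    simp only [Sw]
    split_ifs <;> first | rfl | (exact congrArg pos (by omega)) | (exfalso; omega)
  have hTS : Tw pos j c c = Sw pos j c := by
    funext a
    simp only [Tw, Sw]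
    split_ifs <;> first | rfl | (exact congrArg pos (by omega)) | (exfalso; omega)
  have hT : Tw pos j c i = pos' := by
    rw [hpos']
    funext a
    simp only [Tw]
    split_ifs <;> first | rfl | (exact congrArg pos (by omega)) | (exfalso; omega)
  refine ⟨dl c (j - c) ++ dl (i - 1) (c - i), ?_, ?_, ?_⟩
  · -- Chain'
    have hc2 := (dl_aux (i - 1) (c - i) [] List.isChain_nil (by simp)).1
    rw [List.append_nil] at hc2
    refine (dl_aux c (j - c) _ hc2 ?_).1
    intro y hy
    have := dl_mem _ _ _ (List.mem_of_mem_head? hy)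
    omega
  · intro a ha
    rcases List.mem_append.mp ha with h | h
    · have := dl_mem _ _ _ h; omega
    · have := dl_mem _ _ _ h; omega
  · have hch1 := chain1 n i j c pos hi hic hjn h3 mono2 h4 (j - c) (by omega)
    have hch2 := chain2 n i j c pos hi hic hcj hjn mono1 h2 h3 (c - i) (by omega)
    rw [show c + (j - c) = j by omega, hS] at hch1
    rw [show i + (c - i) = c by omega, hTS, hT] at hch2
    exact dkchain_append hch1 hch2
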